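/- arXiv:1509.04610 — 2 statements merged into one kernel-verified Lean document; each statement's English description precedes it below -/
import Mathlib

section
/- Let F, D, N be finite index types, X an N×F real matrix, U an N×D real matrix, Λ a positive definite F×F real matrix, and S an F×F real matrix with S·Sᵀ = Λ. Let Λ_e be an invertible D×D real matrix. Let (Ω, P) be a probability space and E₁ : Ω → Matrix N D ℝ, E₂ : Ω → Matrix F D ℝ be random matrices with square-integrable entries satisfying, for all columns i, j ∈ D: (a) every entry of E₁ and E₂ has expectation 0; (b) E[(E₁)_{·i} ((E₁)_{·j})ᵀ] = (Λ_e⁻¹)_{ij} · I_N entrywise; (c) E[(E₂)_{·i} ((E₂)_{·j})ᵀ] = (Λ_e⁻¹)_{ij} · I_F entrywise; (d) E[(E₂)_{·i} ((E₁)_{·j})ᵀ] = 0 and E[(E₁)_{·i} ((E₂)_{·j})ᵀ] = 0 entrywise. Define β̃ = (XᵀX + Λ)⁻¹(Xᵀ(U + E₁) + S·E₂) and β̂ = (XᵀX + Λ)⁻¹XᵀU. Then for all i, j ∈ D, the covariance matrix E[(β̃_{·i} − β̂_{·i})(β̃_{·j} − β̂_{·j})ᵀ] equals (Λ_e⁻¹)_{ij}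 · (XᵀX + Λ)⁻¹ entrywise. -/
open Matrix MeasureTheory

lemma integrable_mul_of_memL2 {Ω : Type*} [MeasurableSpace Ω] {P : Measure Ω}
    {g h : Ω → ℝ} (hg : MemLp g 2 P) (hh : MemLp h 2 P) :
    Integrable (fun ω => g ω * h ω) P := by
  have := (hg.smul (p := 2) (r := 1) hh
    (hpqr := ⟨by rw [ENNReal.inv_two_add_inv_two, inv_one]⟩))
  rw [← memLp_one_iff_integrable]
  simpa [smul_eq_mul, mul_comm, Pi.mul_def] using this

/-- Covariance of the noise injection sampler (Macau, Appendix E): with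
`β̃ = (XᵀX + Λ)⁻¹ (Xᵀ(U + E₁) + S E₂)` and `β̂ = (XᵀX + Λ)⁻¹ Xᵀ U`, under
the stated first and second moment assumptions on the noise matrices,
`E[(β̃_{·i} − β̂_{·i})(β̃_{·j} − β̂_{·j})ᵀ] = (Λ_e⁻¹)_{ij} (XᵀX + Λ)⁻¹`
entrywise, for all columns `i, j`. -/
theorem noise_injection_covariance
    {F D N : Type*} [Fintype F] [Fintype D] [Fintype N]
    [DecidableEq F] [DecidableEq N] [DecidableEq D]
    (X : Matrix N F ℝ) (U : Matrix N D ℝ) (Λ S : Matrix F F ℝ)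
    (hΛ : Λ.PosDef) (hS : S * Sᵀ = Λ)
    (Λe : Matrix D D ℝ) (hΛe : IsUnit Λe.det)
    {Ω : Type*} [MeasurableSpace Ω] (P : Measure Ω) [IsProbabilityMeasure P]
    (E₁ : Ω → Matrix N D ℝ) (E₂ : Ω → Matrix F D ℝ)
    (hE₁L2 : ∀ n d, MemLp (fun ω => E₁ ω n d) 2 P)
    (hE₂L2 : ∀ f d, MemLp (fun ω => E₂ ω f d) 2 P)
    (hE₁mean : ∀ n d, ∫ ω, E₁ ω n d ∂P = 0)
    (hE₂mean : ∀ f d, ∫ ω, E₂ ω f d ∂P = 0)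
    (hE₁cov : ∀ (i j : D) (n n' : N),
      ∫ ω, E₁ ω n i * E₁ ω n' j ∂P = Λe⁻¹ i j * (1 : Matrix N N ℝ) n n')
    (hE₂cov : ∀ (i j : D) (f f' : F),
      ∫ ω, E₂ ω f i * E₂ ω f' j ∂P = Λe⁻¹ i j * (1 : Matrix F F ℝ) f f')
    (hcross₂₁ : ∀ (i j : D) (f : F) (n : N), ∫ ω, E₂ ω f i * E₁ ω n j ∂P = 0)
    (hcross₁₂ : ∀ (i j : D) (n : N) (f : F), ∫ ω, E₁ ω n i * E₂ ω f j ∂P = 0)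
    (i j : D) (f f' : F) :
    ∫ ω, (((Xᵀ * X + Λ)⁻¹ * (Xᵀ * (U + E₁ ω) + S * E₂ ω)) f i
            - ((Xᵀ * X + Λ)⁻¹ * (Xᵀ * U)) f i)
        * (((Xᵀ * X + Λ)⁻¹ * (Xᵀ * (U + E₁ ω) + S * E₂ ω)) f' j
            - ((Xᵀ * X + Λ)⁻¹ * (Xᵀ * U)) f' j) ∂P
      = Λe⁻¹ i j * (Xᵀ * X + Λ)⁻¹ f f' := by
  classical
  set M : Matrix F F ℝ := Xᵀ * X + Λ with hM
  set A : Matrix F F ℝ := M⁻¹ with hA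
  -- M is positive definite, hence invertible
  have hXX : (Xᵀ * X).PosSemidef := by
    have := Matrix.posSemidef_conjTranspose_mul_self X
    rwa [Matrix.conjTranspose_eq_transpose_of_trivial] at this
  have hMpd : M.PosDef := Matrix.PosDef.posSemidef_add hXX hΛ
  have hMdet : IsUnit M.det := hMpd.det_pos.ne'.isUnit
  have hMsymm : Mᵀ = M := by
    have hΛsymm : Λᵀ = Λ := by
      rw [← hS, Matrix.transpose_mul, Matrix.transpose_transpose]
    simp [hM, Matrix.transpose_mul, hΛsymm]
  have hAsymm : Aᵀ = A := by
    rw [hA, Matrix.transpose_nonsing_inv, hMsymm]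
  -- coefficient matrices
  set B : Matrix F N ℝ := A * Xᵀ with hB
  set C : Matrix F F ℝ := A * S with hC
  -- pointwise rewriting of the deviation
  have hpt : ∀ (ω : Ω) (g : F) (d : D),
      (A * (Xᵀ * (U + E₁ ω) + S * E₂ ω)) g d - (A * (Xᵀ * U)) g d
        = (∑ n, B g n * E₁ ω n d) + ∑ k, C g k * E₂ ω k d := by
    intro ω g d
    have : A * (Xᵀ * (U + E₁ ω) + S * E₂ ω)
        = A * (Xᵀ * U) + (B * E₁ ω + C * E₂ ω) := by
      rw [hB, hC, Matrix.mul_add, Matrix.mul_add, Matrix.mul_add, Matrix.mul_assoc,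
        Matrix.mul_assoc, add_assoc]
    rw [this]
    simp [Matrix.add_apply, Matrix.mul_apply]
  -- combined index type
  -- integrand as a double sum over K := N ⊕ F
  set c : F → (N ⊕ F) → ℝ := fun g => Sum.elim (fun n => B g n) (fun k => C g k) with hc
  set e : Ω → (N ⊕ F) → D → ℝ :=
    fun ω => Sum.elim (fun n => E₁ ω n) (fun k => E₂ ω k) with he
  have heL2 : ∀ (k : N ⊕ F) (d : D), MemLp (fun ω => e ω k d) 2 P := by
    rintro (n | k) d
    · exact hE₁L2 n d
    · exact hE₂L2 k d
  have hecov : ∀ (k k' : N ⊕ F),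
      ∫ ω, e ω k i * e ω k' j ∂P = Λe⁻¹ i j * (if k = k' then 1 else 0) := by
    rintro (n | k) (n' | k')
    · rw [show (fun ω => e ω (Sum.inl n) i * e ω (Sum.inl n') j)
          = fun ω => E₁ ω n i * E₁ ω n' j from rfl, hE₁cov]
      simp [Matrix.one_apply]
    · rw [show (fun ω => e ω (Sum.inl n) i * e ω (Sum.inr k') j)
          = fun ω => E₁ ω n i * E₂ ω k' j from rfl, hcross₁₂]
      simp
    · rw [show (fun ω => e ω (Sum.inr k) i * e ω (Sum.inl n') j)
          = fun ω => E₂ ω k i * E₁ ω n' j from rfl, hcross₂₁]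
      simp
    · rw [show (fun ω => e ω (Sum.inr k) i * e ω (Sum.inr k') j)
          = fun ω => E₂ ω k i * E₂ ω k' j from rfl, hE₂cov]
      simp [Matrix.one_apply]
  have hint : ∀ (k k' : N ⊕ F),
      Integrable (fun ω => c f k * c f' k' * (e ω k i * e ω k' j)) P :=
    fun k k' => (integrable_mul_of_memL2 (heL2 k i) (heL2 k' j)).const_mul _
  have key : (∫ ω, (∑ k, c f k * e ω k i) * (∑ k', c f' k' * e ω k' j) ∂P)
      = Λe⁻¹ i j * ∑ k, c f k * c f' k := by
    have hrw : ∀ ω : Ω, (∑ k, c f k * e ω k i) * (∑ k', c f' k' * e ω k' j)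
        = ∑ k, ∑ k', c f k * c f' k' * (e ω k i * e ω k' j) := by
      intro ω
      rw [Finset.sum_mul_sum]
      exact Finset.sum_congr rfl fun k _ => Finset.sum_congr rfl fun k' _ => by ring
    simp_rw [hrw]
    rw [integral_finset_sum _ (fun k _ => integrable_finset_sum _ (fun k' _ => hint k k'))]
    have : ∀ k, ∫ ω, ∑ k', c f k * c f' k' * (e ω k i * e ω k' j) ∂P
        = c f k * c f' k * (Λe⁻¹ i j) := by
      intro k
      rw [integral_finset_sum _ (fun k' _ => hint k k')]
      have : ∀ k', ∫ ω, c f k * c f' k' * (e ω k i * e ω k' j) ∂P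
          = c f k * c f' k' * (Λe⁻¹ i j * if k = k' then 1 else 0) := by
        intro k'
        rw [integral_const_mul, hecov]
      simp_rw [this]
      rw [Finset.sum_eq_single k]
      · simp
      · intro k' _ hk'; simp [Ne.symm hk']
      · intro h; exact absurd (Finset.mem_univ k) h
    simp_rw [this]
    rw [Finset.mul_sum]
    exact Finset.sum_congr rfl fun k _ => by ring
  -- identify the sum with a matrix entry
  have hsum : ∑ k, c f k * c f' k = A f f' := by
    rw [Fintype.sum_sum_type]
    have h1 : ∑ n, c f (Sum.inl n) * c f' (Sum.inl n) = (B * Bᵀ) f f' := by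
      simp [Matrix.mul_apply, hc]
    have h2 : ∑ k, c f (Sum.inr k) * c f' (Sum.inr k) = (C * Cᵀ) f f' := by
      simp [Matrix.mul_apply, hc]
    rw [h1, h2, ← Matrix.add_apply]
    congr 1
    have : B * Bᵀ + C * Cᵀ = A * M * Aᵀ := by
      rw [hB, hC, Matrix.transpose_mul, Matrix.transpose_mul, Matrix.transpose_transpose,
        hAsymm, hM, ← hS]
      simp only [Matrix.mul_add, Matrix.add_mul, Matrix.mul_assoc]
    rw [this, hAsymm, hA, Matrix.nonsing_inv_mul M hMdet, Matrix.one_mul]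
  -- put everything together
  have hfun : (fun ω => (((Xᵀ * X + Λ)⁻¹ * (Xᵀ * (U + E₁ ω) + S * E₂ ω)) f i
            - ((Xᵀ * X + Λ)⁻¹ * (Xᵀ * U)) f i)
        * (((Xᵀ * X + Λ)⁻¹ * (Xᵀ * (U + E₁ ω) + S * E₂ ω)) f' j
            - ((Xᵀ * X + Λ)⁻¹ * (Xᵀ * U)) f' j))
      = fun ω => (∑ k, c f k * e ω k i) * (∑ k', c f' k' * e ω k' j) := by
    funext ω
    rw [← hM, ← hA, hpt ω f i, hpt ω f' j]
    congr 1
    · rw [Fintype.sum_sum_type]; simp [hc, he]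
    · rw [Fintype.sum_sum_type]; simp [hc, he]
  rw [hfun, key, hsum]
end

section
/- In the setting of the covariance computation for the noise injection sampler (X an N×F real matrix, U an N×D real matrix, Λ an F×F positive definite real matrix, S with S·Sᵀ = Λ, Λ_e an invertible D×D real matrix, and random matrices E₁, E₂ with zero-mean square-integrable entries satisfying E[(E₁)_{·i}((E₁)_{·j})ᵀ] = (Λ_e⁻¹)_{ij} I_N, E[(E₂)_{·i}((E₂)_{·j})ᵀ] = (Λ_e⁻¹)_{ij} I_F, and E[(E₁)_{·i}((E₂)_{·j})ᵀ] = E[(E₂)_{·i}((E₁)_{·j})ᵀ] = 0 for all i,j), define β̃ = (XᵀX + Λ)⁻¹(Xᵀ(U + E₁) + S·E₂) and β̂ = (XᵀX + Λ)⁻¹XᵀU, and let vec(M)(d,f) = M(f,d). Then for all (d,f) and (d',f') in D × F, E[(vec(β̃)(d,f) − vec(β̂)(d,f)) · (vec(β̃)(d',f') − vec(β̂)(d',f'))] = (Λ_e⁻¹ ⊗ (XᵀX + Λ)⁻¹)((d,f),(d',f')), i.e., the covariance matrix of vec(β̃) equals the Kronecker product Λ_e⁻¹ ⊗ (XᵀX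 + Λ)⁻¹. -/
open Matrix MeasureTheory

open scoped ENNReal

lemma my_integrable_mul {Ω : Type*} [MeasurableSpace Ω] {P : Measure Ω} {f g : Ω → ℝ}
    (hf : MemLp f 2 P) (hg : MemLp g 2 P) :
    Integrable (fun ω => f ω * g ω) P := by
  rw [← memLp_one_iff_integrable]
  exact hg.smul (r := 1) hf

/-- Covariance of `vec(β̃)` for the noise injection sampler (Macau, Appendix E):
with `β̃ = (XᵀX + Λ)⁻¹ (Xᵀ(U + E₁) + S E₂)`, `β̂ = (XᵀX + Λ)⁻¹ Xᵀ U` and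
`vec(M)(d, f) = M f d`, the covariance matrix of `vec(β̃)` is the Kronecker
product `Λ_e⁻¹ ⊗ (XᵀX + Λ)⁻¹`. -/
theorem noise_injection_vec_covariance
    {F D N : Type*} [Fintype F] [Fintype D] [Fintype N]
    [DecidableEq F] [DecidableEq N] [DecidableEq D]
    (X : Matrix N F ℝ) (U : Matrix N D ℝ) (Λ S : Matrix F F ℝ)
    (hΛ : Λ.PosDef) (hS : S * Sᵀ = Λ)
    (Λe : Matrix D D ℝ) (hΛe : IsUnit Λe.det)
    {Ω : Type*} [MeasurableSpace Ω] (P : Measure Ω) [IsProbabilityMeasure P]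
    (E₁ : Ω → Matrix N D ℝ) (E₂ : Ω → Matrix F D ℝ)
    (hE₁L2 : ∀ n d, MemLp (fun ω => E₁ ω n d) 2 P)
    (hE₂L2 : ∀ f d, MemLp (fun ω => E₂ ω f d) 2 P)
    (hE₁mean : ∀ n d, ∫ ω, E₁ ω n d ∂P = 0)
    (hE₂mean : ∀ f d, ∫ ω, E₂ ω f d ∂P = 0)
    (hE₁cov : ∀ (i j : D) (n n' : N),
      ∫ ω, E₁ ω n i * E₁ ω n' j ∂P = Λe⁻¹ i j * (1 : Matrix N N ℝ) n n')
    (hE₂cov : ∀ (i j : D) (f f' : F),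
      ∫ ω, E₂ ω f i * E₂ ω f' j ∂P = Λe⁻¹ i j * (1 : Matrix F F ℝ) f f')
    (hcross₂₁ : ∀ (i j : D) (f : F) (n : N), ∫ ω, E₂ ω f i * E₁ ω n j ∂P = 0)
    (hcross₁₂ : ∀ (i j : D) (n : N) (f : F), ∫ ω, E₁ ω n i * E₂ ω f j ∂P = 0)
    (p q : D × F) :
    ∫ ω, (((Xᵀ * X + Λ)⁻¹ * (Xᵀ * (U + E₁ ω) + S * E₂ ω)) p.2 p.1
            - ((Xᵀ * X + Λ)⁻¹ * (Xᵀ * U)) p.2 p.1)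
        * (((Xᵀ * X + Λ)⁻¹ * (Xᵀ * (U + E₁ ω) + S * E₂ ω)) q.2 q.1
            - ((Xᵀ * X + Λ)⁻¹ * (Xᵀ * U)) q.2 q.1) ∂P
      = Matrix.kroneckerMap (· * ·) Λe⁻¹ (Xᵀ * X + Λ)⁻¹ p q := by
  set M : Matrix F F ℝ := Xᵀ * X + Λ with hMdef
  set A : Matrix F F ℝ := M⁻¹ with hAdef
  set B : Matrix F N ℝ := A * Xᵀ with hBdef
  set C : Matrix F F ℝ := A * S with hCdef
  -- M is positive definite, hence invertible
  have hXX : (Xᵀ * X).PosSemidef := by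
    simpa using Matrix.posSemidef_conjTranspose_mul_self X
  have hM : M.PosDef := Matrix.PosDef.posSemidef_add hXX hΛ
  have hMdet : IsUnit M.det := hM.det_pos.ne'.isUnit
  have hMsymm : Mᵀ = M := hM.isHermitian.eq
  have hAT : Aᵀ = A := by rw [hAdef, Matrix.transpose_nonsing_inv, hMsymm]
  -- key matrix identity : B Bᵀ + C Cᵀ = A
  have hkey : B * Bᵀ + C * Cᵀ = A := by
    have h1 : B * Bᵀ + C * Cᵀ = A * (Xᵀ * X + S * Sᵀ) * Aᵀ := by
      rw [hBdef, hCdef]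
      simp only [Matrix.transpose_mul, Matrix.transpose_transpose, Matrix.add_mul,
        Matrix.mul_add, Matrix.mul_assoc]
    rw [h1, hS, ← hMdef, hAT, hAdef, Matrix.nonsing_inv_mul M hMdet, Matrix.one_mul]
  -- unified noise
  set W : (N ⊕ F) → D → Ω → ℝ :=
    fun i d ω => Sum.elim (fun n => E₁ ω n d) (fun f => E₂ ω f d) i with hWdef
  set c : F → (N ⊕ F) → ℝ := fun f => Sum.elim (fun n => B f n) (fun g => C f g) with hcdef
  have hWL2 : ∀ i d, MemLp (fun ω => W i d ω) 2 P := by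
    rintro (n | f) d
    · exact hE₁L2 n d
    · exact hE₂L2 f d
  have hWcov : ∀ (i j : N ⊕ F) (d d' : D),
      ∫ ω, W i d ω * W j d' ω ∂P
        = Λe⁻¹ d d' * (1 : Matrix (N ⊕ F) (N ⊕ F) ℝ) i j := by
    rintro (n | f) (n' | f') d d'
    · simpa [hWdef, Matrix.one_apply, Sum.inl.injEq] using hE₁cov d d' n n'
    · simpa [hWdef, Matrix.one_apply] using hcross₁₂ d d' n f'
    · simpa [hWdef, Matrix.one_apply] using hcross₂₁ d d' f n'
    · simpa [hWdef, Matrix.one_apply, Sum.inr.injEq] using hE₂cov d d' f f'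
  -- rewrite the integrand
  have hdiff : ∀ (r : D × F) (ω : Ω),
      ((Xᵀ * X + Λ)⁻¹ * (Xᵀ * (U + E₁ ω) + S * E₂ ω)) r.2 r.1
          - ((Xᵀ * X + Λ)⁻¹ * (Xᵀ * U)) r.2 r.1
        = ∑ i : N ⊕ F, c r.2 i * W i r.1 ω := by
    intro r ω
    have hm : (Xᵀ * X + Λ)⁻¹ * (Xᵀ * (U + E₁ ω) + S * E₂ ω)
        - (Xᵀ * X + Λ)⁻¹ * (Xᵀ * U) = B * E₁ ω + C * E₂ ω := by
      rw [hBdef, hCdef, hAdef, hMdef]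
      simp only [Matrix.mul_add, Matrix.mul_assoc]
      abel
    calc ((Xᵀ * X + Λ)⁻¹ * (Xᵀ * (U + E₁ ω) + S * E₂ ω)) r.2 r.1
          - ((Xᵀ * X + Λ)⁻¹ * (Xᵀ * U)) r.2 r.1
        = ((Xᵀ * X + Λ)⁻¹ * (Xᵀ * (U + E₁ ω) + S * E₂ ω)
            - (Xᵀ * X + Λ)⁻¹ * (Xᵀ * U)) r.2 r.1 := by rw [Matrix.sub_apply]
      _ = (B * E₁ ω + C * E₂ ω) r.2 r.1 := by rw [hm]
      _ = ∑ i : N ⊕ F, c r.2 i * W i r.1 ω := by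
          rw [Matrix.add_apply, Matrix.mul_apply, Matrix.mul_apply, hcdef, hWdef]
          rw [Fintype.sum_sum_type]
          simp
  have hint : ∀ (i j : N ⊕ F),
      Integrable (fun ω => W i p.1 ω * W j q.1 ω) P :=
    fun i j => my_integrable_mul (hWL2 i p.1) (hWL2 j q.1)
  calc ∫ ω, (((Xᵀ * X + Λ)⁻¹ * (Xᵀ * (U + E₁ ω) + S * E₂ ω)) p.2 p.1
            - ((Xᵀ * X + Λ)⁻¹ * (Xᵀ * U)) p.2 p.1)
        * (((Xᵀ * X + Λ)⁻¹ * (Xᵀ * (U + E₁ ω) + S * E₂ ω)) q.2 q.1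
            - ((Xᵀ * X + Λ)⁻¹ * (Xᵀ * U)) q.2 q.1) ∂P
      = ∫ ω, ∑ i : N ⊕ F, ∑ j : N ⊕ F,
          (c p.2 i * c q.2 j) * (W i p.1 ω * W j q.1 ω) ∂P := by
        congr 1; funext ω
        rw [hdiff p ω, hdiff q ω, Finset.sum_mul_sum]
        congr 1; funext i; congr 1; funext j; ring
    _ = ∑ i : N ⊕ F, ∑ j : N ⊕ F,
          (c p.2 i * c q.2 j) * ∫ ω, W i p.1 ω * W j q.1 ω ∂P := by
        rw [integral_finset_sum]
        · refine Finset.sum_congr rfl fun i _ => ?_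
          rw [integral_finset_sum]
          · exact Finset.sum_congr rfl fun j _ => integral_const_mul _ _
          · exact fun j _ => (hint i j).const_mul _
        · intro i _
          exact integrable_finset_sum _ fun j _ => (hint i j).const_mul _
    _ = ∑ i : N ⊕ F, ∑ j : N ⊕ F,
          (c p.2 i * c q.2 j) * (Λe⁻¹ p.1 q.1 * (1 : Matrix (N ⊕ F) (N ⊕ F) ℝ) i j) := by
        simp_rw [hWcov]
    _ = Λe⁻¹ p.1 q.1 * ∑ i : N ⊕ F, c p.2 i * c q.2 i := by
        rw [Finset.mul_sum]
        refine Finset.sum_congr rfl fun i _ => ?_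
        rw [Finset.sum_eq_single i]
        · rw [Matrix.one_apply_eq]; ring
        · intro j _ hji
          rw [Matrix.one_apply_ne' hji]; ring
        · intro h; exact absurd (Finset.mem_univ i) h
    _ = Λe⁻¹ p.1 q.1 * (B * Bᵀ + C * Cᵀ) p.2 q.2 := by
        rw [Matrix.add_apply, Matrix.mul_apply, Matrix.mul_apply]
        rw [hcdef]
        congr 1
        rw [Fintype.sum_sum_type]
        simp [Matrix.transpose_apply]
    _ = Matrix.kroneckerMap (· * ·) Λe⁻¹ (Xᵀ * X + Λ)⁻¹ p q := by
        rw [hkey]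
        rfl
end
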